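/- Let θ̂_u⁽ⁿ⁾, θ̂_b⁽ⁿ⁾, σ̂_u,n², σ̂_b,n², σ̂_bu,n be sequences of real-valued random variables on a probability space such that θ̂_u⁽ⁿ⁾ → θ₀ in probability, θ̂_b⁽ⁿ⁾ → θ₀ + μ in probability, n·σ̂_u,n² → ν_u in probability, n·σ̂_b,n² → ν_b in probability, and n·σ̂_bu,n → ν_bu in probability for finite real constants ν_u, ν_b, ν_bu, and such that the denominator (θ̂_u⁽ⁿ⁾ − θ̂_b⁽ⁿ⁾)² + σ̂_u,n² + σ̂_b,n² − 2σ̂_bu,n is almost surely strictly positive for each n. If μ ≠ 0, then the estimated weight λ̂_n = (σ̂_u,n² − σ̂_bu,n)/((θ̂_u⁽ⁿ⁾ − θ̂_b⁽ⁿ⁾)² + σ̂_u,n² + σ̂_b,n² − 2σ̂_bu,n) converges to 0 in probability. -/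

import Mathlib

open MeasureTheory ProbabilityTheory Filter Topology

/-- If `θ̂_u⁽ⁿ⁾ → θ₀`, `θ̂_b⁽ⁿ⁾ → θ₀ + μ` in probability, the scaled variance/covariance
estimates converge in probability to finite constants, and the denominator is a.s. positive,
then for `μ ≠ 0` the plug-in weight `λ̂_n` converges to `0` in probability. -/
theorem lambda_hat_tendsto_zero_in_probability
    {Ω : Type*} [MeasurableSpace Ω] (P : Measure Ω) [IsProbabilityMeasure P]
    (θu θb σu2 σb2 σbu : ℕ → Ω → ℝ) (θ₀ μ νu νb νbu : ℝ)
    (hθu : TendstoInMeasure P θu atTop (fun _ => θ₀))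
    (hθb : TendstoInMeasure P θb atTop (fun _ => θ₀ + μ))
    (hσu : TendstoInMeasure P (fun (n : ℕ) ω => (n : ℝ) * σu2 n ω) atTop (fun _ => νu))
    (hσb : TendstoInMeasure P (fun (n : ℕ) ω => (n : ℝ) * σb2 n ω) atTop (fun _ => νb))
    (hσbu : TendstoInMeasure P (fun (n : ℕ) ω => (n : ℝ) * σbu n ω) atTop (fun _ => νbu))
    (hden : ∀ n, ∀ᵐ ω ∂P,
      (θu n ω - θb n ω) ^ 2 + σu2 n ω + σb2 n ω - 2 * σbu n ω > 0)
    (hμ : μ ≠ 0) :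
    TendstoInMeasure P
      (fun n ω => (σu2 n ω - σbu n ω) /
        ((θu n ω - θb n ω) ^ 2 + σu2 n ω + σb2 n ω - 2 * σbu n ω))
      atTop (fun _ => 0) := by
  rw [tendstoInMeasure_iff_dist] at hθu hθb hσu hσb hσbu ⊢
  intro ε hε
  have hμabs : (0:ℝ) < |μ| := abs_pos.mpr hμ
  set δ : ℝ := |μ| / 4 with hδdef
  have hδ : 0 < δ := by positivity
  set C : ℝ := |νu| + |νb| + |νbu| + 3 with hCdef
  have hC : 0 < C := by positivity
  have hμ2 : (0:ℝ) < μ ^ 2 := by positivity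
  obtain ⟨N₀, hN₀⟩ := exists_nat_gt (max (32 * C / μ ^ 2) (16 * C / (ε * μ ^ 2)))
  have h1 := hθu δ hδ
  have h2 := hθb δ hδ
  have h3 := hσu 1 one_pos
  have h4 := hσb 1 one_pos
  have h5 := hσbu 1 one_pos
  have hsum :
      Tendsto (fun n =>
        P {x | δ ≤ dist (θu n x) θ₀} +
        (P {x | δ ≤ dist (θb n x) (θ₀ + μ)} +
        (P {x | (1:ℝ) ≤ dist ((n : ℝ) * σu2 n x) νu} +
        (P {x | (1:ℝ) ≤ dist ((n : ℝ) * σb2 n x) νb} +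
        P {x | (1:ℝ) ≤ dist ((n : ℝ) * σbu n x) νbu})))) atTop (𝓝 0) := by
    have := h1.add (h2.add (h3.add (h4.add h5)))
    simpa using this
  refine tendsto_of_tendsto_of_tendsto_of_le_of_le' tendsto_const_nhds hsum
    (Eventually.of_forall fun n => zero_le) ?_
  filter_upwards [eventually_ge_atTop (max N₀ 1)] with n hn
  have hn1 : 1 ≤ n := le_trans (le_max_right _ _) hn
  have hnN₀ : N₀ ≤ n := le_trans (le_max_left _ _) hn
  have hnR : (1:ℝ) ≤ (n:ℝ) := by exact_mod_cast hn1
  have hnpos : (0:ℝ) < (n:ℝ) := lt_of_lt_of_le one_pos hnR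
  have hcast : (N₀:ℝ) ≤ (n:ℝ) := by exact_mod_cast hnN₀
  have hnb1 : 32 * C / μ ^ 2 < (n:ℝ) :=
    lt_of_le_of_lt (le_max_left _ _) (lt_of_lt_of_le hN₀ hcast)
  have hnb2 : 16 * C / (ε * μ ^ 2) < (n:ℝ) :=
    lt_of_le_of_lt (le_max_right _ _) (lt_of_lt_of_le hN₀ hcast)
  have hincl : {x | ε ≤ dist ((σu2 n x - σbu n x) /
        ((θu n x - θb n x) ^ 2 + σu2 n x + σb2 n x - 2 * σbu n x)) 0} ⊆
      {x | δ ≤ dist (θu n x) θ₀} ∪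
      ({x | δ ≤ dist (θb n x) (θ₀ + μ)} ∪
      ({x | (1:ℝ) ≤ dist ((n : ℝ) * σu2 n x) νu} ∪
      ({x | (1:ℝ) ≤ dist ((n : ℝ) * σb2 n x) νb} ∪
      {x | (1:ℝ) ≤ dist ((n : ℝ) * σbu n x) νbu}))) := by
    intro x hx
    by_contra hnot
    simp only [Set.mem_union, Set.mem_setOf_eq, not_or, not_le] at hnot
    obtain ⟨e1, e2, e3, e4, e5⟩ := hnot
    simp only [Set.mem_setOf_eq, Real.dist_eq, sub_zero] at hx e1 e2 e3 e4 e5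
    -- bounds on the variance estimates
    have bu : |σu2 n x| ≤ C / n := by
      rw [le_div_iff₀ hnpos]
      calc |σu2 n x| * n = |(n:ℝ) * σu2 n x| := by
            rw [abs_mul, abs_of_pos hnpos]; ring
        _ ≤ |(n:ℝ) * σu2 n x - νu| + |νu| := by
            have := abs_sub_abs_le_abs_sub ((n:ℝ) * σu2 n x) νu
            linarith [abs_nonneg νu]
        _ ≤ C := by
            simp only [hCdef]; linarith [abs_nonneg νb, abs_nonneg νbu, e3.le]
    have bb : |σb2 n x| ≤ C / n := by
      rw [le_div_iff₀ hnpos]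
      calc |σb2 n x| * n = |(n:ℝ) * σb2 n x| := by
            rw [abs_mul, abs_of_pos hnpos]; ring
        _ ≤ |(n:ℝ) * σb2 n x - νb| + |νb| := by
            have := abs_sub_abs_le_abs_sub ((n:ℝ) * σb2 n x) νb
            linarith [abs_nonneg νb]
        _ ≤ C := by
            simp only [hCdef]; linarith [abs_nonneg νu, abs_nonneg νbu, e4.le]
    have bbu : |σbu n x| ≤ C / n := by
      rw [le_div_iff₀ hnpos]
      calc |σbu n x| * n = |(n:ℝ) * σbu n x| := by
            rw [abs_mul, abs_of_pos hnpos]; ring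
        _ ≤ |(n:ℝ) * σbu n x - νbu| + |νbu| := by
            have := abs_sub_abs_le_abs_sub ((n:ℝ) * σbu n x) νbu
            linarith [abs_nonneg νbu]
        _ ≤ C := by
            simp only [hCdef]; linarith [abs_nonneg νu, abs_nonneg νb, e5.le]
    -- the squared difference is bounded below
    have hdiff : (θu n x - θb n x) ^ 2 ≥ μ ^ 2 / 4 := by
      have h12 : |θu n x - θb n x + μ| < 2 * δ := by
        have : θu n x - θb n x + μ = (θu n x - θ₀) - (θb n x - (θ₀ + μ)) := by ring
        rw [this]
        calc |(θu n x - θ₀) - (θb n x - (θ₀ + μ))| ≤ |θu n x - θ₀| + |θb n x - (θ₀ + μ)| :=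
              abs_sub _ _
          _ < 2 * δ := by linarith
      have habs : |μ| - 2 * δ ≤ |θu n x - θb n x| := by
        have := abs_sub_abs_le_abs_sub μ (-(θu n x - θb n x))
        simp only [abs_neg, sub_neg_eq_add] at this
        have h' : |μ + (θu n x - θb n x)| = |θu n x - θb n x + μ| := by ring_nf
        linarith [h12, this, h'.le, h'.ge]
      have hq : |μ| / 2 ≤ |θu n x - θb n x| := by
        simp only [hδdef] at habs; linarith
      calc μ ^ 2 / 4 = (|μ| / 2) ^ 2 := by rw [div_pow, sq_abs]; ring
        _ ≤ |θu n x - θb n x| ^ 2 := by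
            apply pow_le_pow_left₀ (by positivity) hq
        _ = (θu n x - θb n x) ^ 2 := sq_abs _
    -- bound C/n
    have hCn1 : C / n ≤ μ ^ 2 / 32 := by
      rw [div_le_div_iff₀ hnpos (by norm_num : (0:ℝ) < 32)]
      rw [div_lt_iff₀ hμ2] at hnb1
      nlinarith
    have hCn2 : 2 * (C / n) < ε * (μ ^ 2 / 8) := by
      rw [div_lt_iff₀ (by positivity : (0:ℝ) < ε * μ ^ 2)] at hnb2
      have h : C / n < ε * μ ^ 2 / 16 := by
        rw [div_lt_div_iff₀ hnpos (by norm_num : (0:ℝ) < 16)]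
        nlinarith
      linarith
    set D := (θu n x - θb n x) ^ 2 + σu2 n x + σb2 n x - 2 * σbu n x with hD
    have hDlb : μ ^ 2 / 8 ≤ D := by
      obtain ⟨bu1, bu2⟩ := abs_le.mp bu
      obtain ⟨bb1, bb2⟩ := abs_le.mp bb
      obtain ⟨bbu1, bbu2⟩ := abs_le.mp bbu
      rw [hD]
      linarith [hdiff, hCn1]
    have hDpos : 0 < D := lt_of_lt_of_le (by positivity) hDlb
    have hNb : |σu2 n x - σbu n x| < ε * D := by
      calc |σu2 n x - σbu n x| ≤ |σu2 n x| + |σbu n x| := abs_sub _ _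
        _ ≤ 2 * (C / n) := by linarith
        _ < ε * (μ ^ 2 / 8) := hCn2
        _ ≤ ε * D := mul_le_mul_of_nonneg_left hDlb hε.le
    have : |(σu2 n x - σbu n x) / D| < ε := by
      rw [abs_div, abs_of_pos hDpos, div_lt_iff₀ hDpos]
      linarith [hNb]
    exact absurd hx (not_le.mpr this)
  calc P {x | ε ≤ dist ((σu2 n x - σbu n x) /
        ((θu n x - θb n x) ^ 2 + σu2 n x + σb2 n x - 2 * σbu n x)) 0} ≤ _ :=
        measure_mono hincl
    _ ≤ _ := by
      refine le_trans (measure_union_le _ _) ?_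
      gcongr
      refine le_trans (measure_union_le _ _) ?_
      gcongr
      refine le_trans (measure_union_le _ _) ?_
      gcongr
      exact measure_union_le _ _
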